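/- In scale-free percolation on ℤ, suppose E[W] = 1, α > 2, and edges are conditionally independent with p_{xy} = 1 - e^{-λW_xW_y/|x-y|^α}. Let A₀ be the event that no vertex y ≤ 0 is connected by an occupied edge to any vertex z > 0. Then P(A₀) ≥ exp(−λ Σ_{n=1}^∞ n^{-(α-1)}) > 0. -/

import Mathlib

open MeasureTheory ProbabilityTheory Real

/-- A finite set of ordered pairs representing distinct (undirected) edges:
no loops and no pair together with its reversal. -/
def OkEdges {V : Type*} [DecidableEq V] (S : Finset (V × V)) : Prop :=
  (∀ p ∈ S, p.1 ≠ p.2) ∧ ∀ p ∈ S, p.swap ∉ S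

/-- The parametrization of pairs (y, z) with y ≤ 0 < z by (distance - 1, -y). -/
def sfpPhi : ℕ × ℕ → ℤ × ℤ := fun q => (-(q.2 : ℤ), (q.1 : ℤ) + 1 - (q.2 : ℤ))

lemma sfpPhi_injective : Function.Injective sfpPhi := by
  rintro ⟨m, k⟩ ⟨m', k'⟩ h
  simp only [sfpPhi, Prod.mk.injEq, neg_inj, Nat.cast_inj] at h
  obtain ⟨hk, hm⟩ := h
  subst hk
  have : (m : ℤ) = (m' : ℤ) := by omega
  exact Prod.ext (by exact_mod_cast this) rfl

/-- Finite index sets. -/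
def sfpD (N : ℕ) : Finset (ℕ × ℕ) :=
  (Finset.range N ×ˢ Finset.range N).filter (fun q => q.2 ≤ q.1)

def sfpS (N : ℕ) : Finset (ℤ × ℤ) := (sfpD N).image sfpPhi

lemma mem_sfpS {N : ℕ} {p : ℤ × ℤ} (hp : p ∈ sfpS N) : p.1 ≤ 0 ∧ 0 < p.2 := by
  simp only [sfpS, Finset.mem_image] at hp
  obtain ⟨⟨m, k⟩, hq, rfl⟩ := hp
  simp only [sfpD, Finset.mem_filter, Finset.mem_product, Finset.mem_range] at hq
  constructor
  · simp [sfpPhi]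
  · simp only [sfpPhi]
    have : (k : ℤ) ≤ (m : ℤ) := by exact_mod_cast hq.2
    omega

lemma sfpS_mono : Monotone sfpS := by
  intro N M hNM
  apply Finset.image_subset_image
  intro q hq
  simp only [sfpD, Finset.mem_filter, Finset.mem_product, Finset.mem_range] at hq ⊢
  omega

lemma sfpOk (N : ℕ) : OkEdges (sfpS N) := by
  constructor
  · intro p hp
    have := mem_sfpS hp
    omega
  · intro p hp hps
    have h1 := mem_sfpS hp
    have h2 := mem_sfpS hps
    simp only [Prod.swap] at h2
    omega

lemma sfp_summable {α : ℝ} (hα : 2 < α) :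
    Summable (fun n : ℕ => ((n : ℝ) + 1) ^ (-(α - 1))) := by
  have h : Summable (fun n : ℕ => (n : ℝ) ^ (-(α - 1))) :=
    Real.summable_nat_rpow.mpr (by linarith)
  have := (_root_.summable_nat_add_iff (f := fun n : ℕ => (n : ℝ) ^ (-(α - 1))) 1).mpr h
  convert this using 2 with n
  · rfl
  · push_cast
    ring_nf

theorem stmt_15 {Ω : Type*} [MeasureSpace Ω] [IsProbabilityMeasure (ℙ : Measure Ω)]
    (α lam : ℝ) (hα : 2 < α) (hlam : 0 < lam)
    (W : ℤ → Ω → ℝ) (Ed : ℤ → ℤ → Ω → Bool)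
    (hWmeas : ∀ x, Measurable (W x))
    (hEmeas : ∀ x y, Measurable (Ed x y))
    (hWnn : ∀ x ω, 0 ≤ W x ω)
    (hiid : iIndepFun W ℙ)
    (hident : ∀ x y : ℤ, IdentDistrib (W x) (W y) ℙ ℙ)
    -- E[W] = 1:
    (hInt : Integrable (W 0) ℙ) (hmean : ∫ ω, W 0 ω ∂ℙ = 1)
    (hsymm : ∀ x y ω, Ed x y ω = Ed y x ω)
    -- conditionally on the weights the edges are independent with
    -- vacancy probability exp(-λ W_x W_y/|x-y|^α):
    (h_model : ∀ S : Finset (ℤ × ℤ), OkEdges S →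
      ℙ {ω | ∀ p ∈ S, Ed p.1 p.2 ω = false} =
        ∫⁻ ω, ∏ p ∈ S, ENNReal.ofReal
          (Real.exp (-(lam * W p.1 ω * W p.2 ω / |((p.1 - p.2 : ℤ) : ℝ)| ^ α))) ∂ℙ) :
    -- A₀ = {no vertex y ≤ 0 is connected by an occupied edge to any vertex z > 0}:
    ENNReal.ofReal (Real.exp (-lam * ∑' n : ℕ, ((n : ℝ) + 1) ^ (-(α - 1)))) ≤
        ℙ {ω | ∀ y z : ℤ, y ≤ 0 → 0 < z → Ed y z ω = false} ∧
      0 < ℙ {ω | ∀ y z : ℤ, y ≤ 0 → 0 < z → Ed y z ω = false} := by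
  classical
  set A := {ω : Ω | ∀ y z : ℤ, y ≤ 0 → 0 < z → Ed y z ω = false} with hA
  set E : ℕ → Set Ω := fun N => {ω | ∀ p ∈ sfpS N, Ed p.1 p.2 ω = false} with hE
  -- A = ⋂ E N
  have hAE : A = ⋂ N, E N := by
    ext ω
    simp only [hA, hE, Set.mem_setOf_eq, Set.mem_iInter]
    constructor
    · intro h N p hp
      have hp' := mem_sfpS hp
      exact h p.1 p.2 hp'.1 hp'.2
    · intro h y z hy hz
      set k := (-y).toNat with hk
      set m := (z - y - 1).toNat with hm
      have hkc : (k : ℤ) = -y := Int.toNat_of_nonneg (by omega)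
      have hmc : (m : ℤ) = z - y - 1 := Int.toNat_of_nonneg (by omega)
      have hkm : k ≤ m := by omega
      have hmemD : (m, k) ∈ sfpD (m + 1) := by
        simp only [sfpD, Finset.mem_filter, Finset.mem_product, Finset.mem_range]
        omega
      have hmemS : sfpPhi (m, k) ∈ sfpS (m + 1) :=
        Finset.mem_image_of_mem _ hmemD
      have := h (m + 1) _ hmemS
      have hφ : sfpPhi (m, k) = (y, z) := by
        simp only [sfpPhi, Prod.mk.injEq]
        omega
      rwa [hφ] at this
  -- measurability of E N
  have hEmset : ∀ N, MeasurableSet (E N) := by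
    intro N
    have : E N = ⋂ p ∈ (sfpS N : Set (ℤ × ℤ)), (Ed p.1 p.2) ⁻¹' {false} := by
      ext ω
      simp [hE, Set.mem_iInter]
    rw [this]
    exact MeasurableSet.biInter (Finset.countable_toSet _)
      (fun p _ => (hEmeas p.1 p.2) (measurableSet_singleton false))
  -- antitone
  have hanti : Antitone E := by
    intro N M hNM ω hω p hp
    exact hω p (sfpS_mono hNM hp)
  -- continuity from above
  have hmeasA : ℙ A = ⨅ N, ℙ (E N) := by
    rw [hAE]
    exact Directed.measure_iInter (fun N => (hEmset N).nullMeasurableSet)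
      (hanti.directed_ge) ⟨0, measure_ne_top ℙ _⟩
  -- the key bound for each N
  have hstep : ∀ N : ℕ,
      ENNReal.ofReal (Real.exp (-lam * ∑' n : ℕ, ((n : ℝ) + 1) ^ (-(α - 1)))) ≤ ℙ (E N) := by
    intro N
    have hmodel := h_model (sfpS N) (sfpOk N)
    -- the exponent sum
    set X : Ω → ℝ := fun ω =>
      ∑ p ∈ sfpS N, lam * W p.1 ω * W p.2 ω / |((p.1 - p.2 : ℤ) : ℝ)| ^ α with hX
    have htermnn : ∀ (p : ℤ × ℤ) (ω : Ω),
        0 ≤ lam * W p.1 ω * W p.2 ω / |((p.1 - p.2 : ℤ) : ℝ)| ^ α := by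
      intro p ω
      apply div_nonneg
      · have := hWnn p.1 ω; have := hWnn p.2 ω; positivity
      · exact Real.rpow_nonneg (abs_nonneg _) α
    have hXnn : ∀ ω, 0 ≤ X ω := fun ω =>
      Finset.sum_nonneg (fun p _ => htermnn p ω)
    have hXmeas : Measurable X := by
      apply Finset.measurable_sum
      intro p _
      exact (((hWmeas p.1).const_mul lam).mul (hWmeas p.2)).div_const _
    -- rewrite the lintegral integrand as ofReal (exp (-X ω))
    have hprod : ∀ ω, (∏ p ∈ sfpS N, ENNReal.ofReal
        (Real.exp (-(lam * W p.1 ω * W p.2 ω / |((p.1 - p.2 : ℤ) : ℝ)| ^ α)))) =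
        ENNReal.ofReal (Real.exp (-X ω)) := by
      intro ω
      rw [← ENNReal.ofReal_prod_of_nonneg (fun p _ => (Real.exp_pos _).le),
        ← Real.exp_sum]
      congr 1
      rw [hX, ← Finset.sum_neg_distrib]
    -- integrability of each term
    have hWint : ∀ x : ℤ, Integrable (W x) ℙ := fun x =>
      (hident x 0).integrable_iff.mpr hInt
    have hWintegral : ∀ x : ℤ, ∫ ω, W x ω ∂ℙ = 1 := fun x =>
      ((hident x 0).integral_eq).trans hmean
    have htermint : ∀ p ∈ sfpS N, Integrable
        (fun ω => lam * W p.1 ω * W p.2 ω / |((p.1 - p.2 : ℤ) : ℝ)| ^ α) ℙ := by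
      intro p hp
      have hne : p.1 ≠ p.2 := (sfpOk N).1 p hp
      have hmul : Integrable (W p.1 * W p.2) ℙ :=
        (hiid.indepFun hne).integrable_mul (hWint p.1) (hWint p.2)
      have := hmul.mul_const (lam / |((p.1 - p.2 : ℤ) : ℝ)| ^ α)
      convert this using 2 with ω
      simp only [Pi.mul_apply]
      ring
    have hXint : Integrable X ℙ := integrable_finset_sum _ htermint
    -- compute ∫ X
    have hXintegral : ∫ ω, X ω ∂ℙ = ∑ p ∈ sfpS N, lam / |((p.1 - p.2 : ℤ) : ℝ)| ^ α := by
      rw [hX, integral_finset_sum _ htermint]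
      apply Finset.sum_congr rfl
      intro p hp
      have hne : p.1 ≠ p.2 := (sfpOk N).1 p hp
      have hmulint : ∫ ω, (W p.1 * W p.2) ω ∂ℙ = 1 := by
        rw [(hiid.indepFun hne).integral_mul_eq_mul_integral (hWint p.1).aestronglyMeasurable
          (hWint p.2).aestronglyMeasurable,
          hWintegral p.1, hWintegral p.2, mul_one]
      have heq : (fun ω => lam * W p.1 ω * W p.2 ω / |((p.1 - p.2 : ℤ) : ℝ)| ^ α) =
          fun ω => (W p.1 * W p.2) ω * (lam / |((p.1 - p.2 : ℤ) : ℝ)| ^ α) := by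
        funext ω; simp only [Pi.mul_apply]; ring
      rw [heq, integral_mul_const, hmulint, one_mul]
    -- bound the sum
    have hsumbound : ∑ p ∈ sfpS N, lam / |((p.1 - p.2 : ℤ) : ℝ)| ^ α ≤
        lam * ∑' n : ℕ, ((n : ℝ) + 1) ^ (-(α - 1)) := by
      rw [sfpS, Finset.sum_image (fun q _ q' _ h => sfpPhi_injective h)]
      have habs : ∀ q : ℕ × ℕ, |(((sfpPhi q).1 - (sfpPhi q).2 : ℤ) : ℝ)| = (q.1 : ℝ) + 1 := by
        intro q
        have : ((sfpPhi q).1 - (sfpPhi q).2 : ℤ) = -((q.1 : ℤ) + 1) := by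
          simp only [sfpPhi]; ring
        rw [this]
        push_cast
        rw [abs_neg, abs_of_nonneg (by positivity)]
      calc ∑ q ∈ sfpD N, lam / |(((sfpPhi q).1 - (sfpPhi q).2 : ℤ) : ℝ)| ^ α
          = ∑ q ∈ sfpD N, lam / ((q.1 : ℝ) + 1) ^ α := by
            apply Finset.sum_congr rfl
            intro q _
            rw [habs q]
        _ ≤ ∑ m ∈ Finset.range N, ((m : ℝ) + 1) * (lam / ((m : ℝ) + 1) ^ α) := by
            have hD : sfpD N ⊆ (Finset.range N).biUnion
                (fun m => (Finset.range (m + 1)).image (fun k => (m, k))) := by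
              intro q hq
              simp only [sfpD, Finset.mem_filter, Finset.mem_product, Finset.mem_range] at hq
              simp only [Finset.mem_biUnion, Finset.mem_image, Finset.mem_range]
              exact ⟨q.1, hq.1.1, q.2, by omega, by simp⟩
            calc ∑ q ∈ sfpD N, lam / ((q.1 : ℝ) + 1) ^ α
                ≤ ∑ q ∈ (Finset.range N).biUnion
                    (fun m => (Finset.range (m + 1)).image (fun k => (m, k))),
                    lam / ((q.1 : ℝ) + 1) ^ α := by
                  apply Finset.sum_le_sum_of_subset_of_nonneg hD
                  intro q _ _
                  apply div_nonneg hlam.le (Real.rpow_nonneg (by positivity) α)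
              _ ≤ ∑ m ∈ Finset.range N, ((m : ℝ) + 1) * (lam / ((m : ℝ) + 1) ^ α) := by
                  rw [Finset.sum_biUnion]
                  · apply Finset.sum_le_sum
                    intro m _
                    rw [Finset.sum_image (by intro a _ b _ h; simpa using h)]
                    simp only [Finset.sum_const, Finset.card_range, nsmul_eq_mul]
                    push_cast
                    exact le_refl _
                  · intro a _ b _ hab
                    apply Finset.disjoint_left.mpr
                    intro q hqa hqb
                    simp only [Finset.mem_image, Finset.mem_range] at hqa hqb
                    obtain ⟨k, _, rfl⟩ := hqa
                    obtain ⟨k', _, hq⟩ := hqb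
                    exact hab (congrArg Prod.fst hq.symm)
        _ = ∑ m ∈ Finset.range N, lam * ((m : ℝ) + 1) ^ (-(α - 1)) := by
            apply Finset.sum_congr rfl
            intro m _
            have hx : (0 : ℝ) < (m : ℝ) + 1 := by positivity
            rw [show -(α - 1) = 1 + -α by ring, Real.rpow_add hx, Real.rpow_one,
              Real.rpow_neg hx.le]
            field_simp
        _ = lam * ∑ m ∈ Finset.range N, ((m : ℝ) + 1) ^ (-(α - 1)) := by
            rw [Finset.mul_sum]
        _ ≤ lam * ∑' n : ℕ, ((n : ℝ) + 1) ^ (-(α - 1)) := by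
            apply mul_le_mul_of_nonneg_left _ hlam.le
            exact (sfp_summable hα).sum_le_tsum _ (fun n _ => Real.rpow_nonneg (by positivity) _)
    -- Jensen's inequality
    have hgmeas : Measurable (fun ω => Real.exp (-X ω)) := (hXmeas.neg).exp
    have hgint : Integrable (fun ω => Real.exp (-X ω)) ℙ := by
      apply Integrable.mono' (integrable_const (1 : ℝ)) hgmeas.aestronglyMeasurable
      filter_upwards with ω
      rw [Real.norm_eq_abs, abs_of_pos (Real.exp_pos _)]
      exact Real.exp_le_one_iff.mpr (neg_nonpos_of_nonneg (hXnn ω))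
    have hjensen : Real.exp (-∫ ω, X ω ∂ℙ) ≤ ∫ ω, Real.exp (-X ω) ∂ℙ := by
      have := convexOn_exp.map_integral_le (continuous_exp.continuousOn)
        isClosed_univ (Filter.Eventually.of_forall (fun ω => Set.mem_univ (-X ω)))
        hXint.neg (by exact hgint)
      rw [integral_neg] at this
      exact this
    -- assemble
    simp only [hE]
    rw [hmodel]
    have hlin : ∫⁻ ω, ∏ p ∈ sfpS N, ENNReal.ofReal
        (Real.exp (-(lam * W p.1 ω * W p.2 ω / |((p.1 - p.2 : ℤ) : ℝ)| ^ α))) ∂ℙ =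
        ENNReal.ofReal (∫ ω, Real.exp (-X ω) ∂ℙ) := by
      rw [MeasureTheory.ofReal_integral_eq_lintegral_ofReal hgint
        (Filter.Eventually.of_forall (fun ω => (Real.exp_pos _).le))]
      apply lintegral_congr
      intro ω
      exact hprod ω
    rw [hlin]
    apply ENNReal.ofReal_le_ofReal
    calc Real.exp (-lam * ∑' n : ℕ, ((n : ℝ) + 1) ^ (-(α - 1)))
        ≤ Real.exp (-∫ ω, X ω ∂ℙ) := by
          apply Real.exp_le_exp.mpr
          rw [neg_mul, neg_le_neg_iff]
          rw [hXintegral]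
          exact hsumbound
      _ ≤ ∫ ω, Real.exp (-X ω) ∂ℙ := hjensen
  constructor
  · rw [hmeasA]
    exact le_iInf hstep
  · calc (0 : ENNReal) < ENNReal.ofReal (Real.exp (-lam * ∑' n : ℕ, ((n : ℝ) + 1) ^ (-(α - 1)))) :=
          ENNReal.ofReal_pos.mpr (Real.exp_pos _)
      _ ≤ _ := by rw [hmeasA]; exact le_iInf hstep
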